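/- Let I_1,…,I_m be nonempty subsets of [n] and suppose the bipartite graph H on left vertex set [m] and right vertex set [n], with an edge between left vertex i and right vertex j exactly when j ∈ I_i, is a forest (contains no cycle). Let Π := Δ_{I_1} + ⋯ + Δ_{I_m} ⊂ ℝ^n. Then every lattice point of Π is a vertex (extreme point) of Π, and every lattice point of Π has the form e_{j_1} + ⋯ + e_{j_m} for some indices j_1,…,j_m with j_i ∈ I_i for each i ∈ [m]. -/

import Mathlib

open Pointwise

noncomputable section

/-- The simplex `Δ_I := conv(e_i : i ∈ I)` in `ℝ^n`. -/
def simpA (n : ℕ) (I : Finset (Fin n)) : Set (Fin n → ℝ) :=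
  convexHull ℝ ((fun j => Pi.single j (1 : ℝ)) '' ↑I)

/-- The lattice points `ℤ^n ⊆ ℝ^n`. -/
def latt (n : ℕ) : Set (Fin n → ℝ) := {x | ∀ j, ∃ z : ℤ, x j = (z : ℝ)}

/-- The bipartite graph on left vertices `[m]` and right vertices `[n]`, with an edge between
left vertex `i` and right vertex `j` exactly when `j ∈ I_i`. -/
def bipG (m n : ℕ) (I : Fin m → Finset (Fin n)) : SimpleGraph (Fin m ⊕ Fin n) where
  Adj u v :=
    (∃ i j, u = Sum.inl i ∧ v = Sum.inr j ∧ j ∈ I i) ∨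
    (∃ i j, u = Sum.inr j ∧ v = Sum.inl i ∧ j ∈ I i)
  symm := by
    refine ⟨?_⟩
    rintro u v (⟨i, j, rfl, rfl, h⟩ | ⟨i, j, rfl, rfl, h⟩)
    · exact Or.inr ⟨i, j, rfl, rfl, h⟩
    · exact Or.inl ⟨i, j, rfl, rfl, h⟩
  loopless := by
    refine ⟨?_⟩
    rintro u (⟨i, j, rfl, h, -⟩ | ⟨i, j, rfl, h, -⟩) <;> simp at h


lemma acyclic_anti {V : Type*} {G G' : SimpleGraph V} (h : G ≤ G') (hac : G'.IsAcyclic) :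
    G.IsAcyclic := fun _ p hp => hac (p.mapLe h) ((SimpleGraph.Walk.mapLe_isCycle h).mpr hp)

lemma no_adj_of_acyclic {V : Type*} [Fintype V] {G : SimpleGraph V}
    (hac : G.IsAcyclic)
    (h2 : ∀ v w : V, G.Adj v w → ∃ w', w' ≠ w ∧ G.Adj v w') :
    ∀ v w : V, ¬ G.Adj v w := by
  classical
  intro v w hvw
  have key : ∀ k : ℕ, ∃ (a b : V) (p : G.Walk a b), p.IsPath ∧ p.length = k + 1 := by
    intro k
    induction k with
    | zero =>
      exact ⟨v, w, SimpleGraph.Walk.cons hvw SimpleGraph.Walk.nil, by simp [hvw.ne], by simp⟩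
    | succ k ih =>
      obtain ⟨a, b, p, hp, hlen⟩ := ih
      cases p with
      | nil => simp at hlen
      | cons h q =>
        rename_i c
        obtain ⟨w', hw'ne, hw'adj⟩ := h2 a c h
        by_cases hmem : w' ∈ (SimpleGraph.Walk.cons h q).support
        · exfalso
          have ht : ((SimpleGraph.Walk.cons h q).takeUntil w' hmem).IsPath := hp.takeUntil _
          have hedge : s(w', a) ∉ ((SimpleGraph.Walk.cons h q).takeUntil w' hmem).edges := by
            intro hmem'
            have hPe : s(w', a) ∈ (SimpleGraph.Walk.cons h q).edges :=
              SimpleGraph.Walk.edges_takeUntil_subset _ _ hmem'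
            rw [SimpleGraph.Walk.edges_cons] at hPe
            rcases List.mem_cons.mp hPe with h1 | h1
            · rw [Sym2.eq_iff] at h1
              rcases h1 with ⟨h1, -⟩ | ⟨h1, -⟩
              · exact hw'adj.ne' h1
              · exact hw'ne h1
            · have : a ∈ q.support := SimpleGraph.Walk.snd_mem_support_of_mem_edges _ h1
              exact ((SimpleGraph.Walk.cons_isPath_iff _ _).mp hp).2 this
          exact hac _ ((SimpleGraph.Walk.cons_isCycle_iff _ hw'adj.symm).mpr ⟨ht, hedge⟩)
        · refine ⟨w', b, SimpleGraph.Walk.cons hw'adj.symm (SimpleGraph.Walk.cons h q), ?_, by simp [hlen]⟩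
          rw [SimpleGraph.Walk.cons_isPath_iff]
          exact ⟨hp, hmem⟩
  obtain ⟨a, b, p, hp, hlen⟩ := key (Fintype.card V)
  have := hp.length_lt
  omega

lemma sum_int_of_zero_one {α : Type*} (s : Finset α) (f : α → ℝ)
    (h : ∀ a ∈ s, f a = 0 ∨ f a = 1) : ∃ z : ℤ, ∑ a ∈ s, f a = z := by
  classical
  refine ⟨∑ a ∈ s, if f a = 1 then 1 else 0, ?_⟩
  rw [Int.cast_sum]
  refine Finset.sum_congr rfl fun a ha => ?_
  rcases h a ha with h' | h' <;> simp [h']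

lemma not_int_of_frac {r : ℝ} (h0 : 0 < r) (h1 : r < 1) (z : ℤ) : r ≠ (z : ℝ) := by
  rintro rfl
  have h0' : 0 < z := by exact_mod_cast h0
  have h1' : z < 1 := by exact_mod_cast h1
  omega

lemma core (n m : ℕ) (I : Fin m → Finset (Fin n))
    (hforest : (bipG m n I).IsAcyclic)
    (t : Fin m → Fin n → ℝ)
    (hnn : ∀ i j, 0 ≤ t i j)
    (hsupp : ∀ i j, t i j ≠ 0 → j ∈ I i)
    (hrow : ∀ i, ∑ j, t i j = 1)
    (hcol : ∀ j, ∃ z : ℤ, ∑ i, t i j = z) :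
    ∀ i j, t i j = 0 ∨ t i j = 1 := by
  classical
  set F : SimpleGraph (Fin m ⊕ Fin n) :=
    { Adj := fun u v =>
        (∃ i j, u = Sum.inl i ∧ v = Sum.inr j ∧ t i j ≠ 0 ∧ t i j ≠ 1) ∨
        (∃ i j, u = Sum.inr j ∧ v = Sum.inl i ∧ t i j ≠ 0 ∧ t i j ≠ 1),
      symm := by
        refine ⟨?_⟩
        rintro u v (⟨i, j, rfl, rfl, h⟩ | ⟨i, j, rfl, rfl, h⟩)
        · exact Or.inr ⟨i, j, rfl, rfl, h⟩
        · exact Or.inl ⟨i, j, rfl, rfl, h⟩,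
      loopless := by
        refine ⟨?_⟩
        rintro u (⟨i, j, rfl, h, -⟩ | ⟨i, j, rfl, h, -⟩) <;> simp at h } with hF
  have hle : F ≤ bipG m n I := by
    rintro u v (⟨i, j, rfl, rfl, h0, -⟩ | ⟨i, j, rfl, rfl, h0, -⟩)
    · exact Or.inl ⟨i, j, rfl, rfl, hsupp i j h0⟩
    · exact Or.inr ⟨i, j, rfl, rfl, hsupp i j h0⟩
  have hacF : F.IsAcyclic := acyclic_anti hle hforest
  -- basic bounds for fractional entries
  have hfrac : ∀ i j, t i j ≠ 0 → t i j ≠ 1 → 0 < t i j ∧ t i j < 1 := by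
    intro i j h0 h1
    refine ⟨(hnn i j).lt_of_ne (Ne.symm h0), lt_of_le_of_ne ?_ h1⟩
    calc t i j ≤ ∑ j', t i j' :=
          Finset.single_le_sum (fun j' _ => hnn i j') (Finset.mem_univ j)
      _ = 1 := hrow i
  -- the "other fractional entry in the row" fact
  have hrowstep : ∀ i j, t i j ≠ 0 → t i j ≠ 1 →
      ∃ j', j' ≠ j ∧ t i j' ≠ 0 ∧ t i j' ≠ 1 := by
    intro i j h0 h1
    by_contra hno
    push_neg at hno
    have hz : ∃ z : ℤ, ∑ j' ∈ Finset.univ.erase j, t i j' = z := by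
      apply sum_int_of_zero_one
      intro j' hj'
      have hne : j' ≠ j := Finset.ne_of_mem_erase hj'
      by_cases h0' : t i j' = 0
      · exact Or.inl h0'
      · exact Or.inr (hno j' hne h0')
    obtain ⟨z, hz⟩ := hz
    have hsum : t i j + ∑ j' ∈ Finset.univ.erase j, t i j' = 1 := by
      rw [Finset.add_sum_erase _ _ (Finset.mem_univ j)]; exact hrow i
    have : t i j = ((1 - z : ℤ) : ℝ) := by push_cast; linarith [hz]
    obtain ⟨hp, hl⟩ := hfrac i j h0 h1
    exact not_int_of_frac hp hl _ this
  have hcolstep : ∀ i j, t i j ≠ 0 → t i j ≠ 1 →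
      ∃ i', i' ≠ i ∧ t i' j ≠ 0 ∧ t i' j ≠ 1 := by
    intro i j h0 h1
    by_contra hno
    push_neg at hno
    have hz : ∃ z : ℤ, ∑ i' ∈ Finset.univ.erase i, t i' j = z := by
      apply sum_int_of_zero_one
      intro i' hi'
      have hne : i' ≠ i := Finset.ne_of_mem_erase hi'
      by_cases h0' : t i' j = 0
      · exact Or.inl h0'
      · exact Or.inr (hno i' hne h0')
    obtain ⟨z, hz⟩ := hz
    obtain ⟨z0, hz0⟩ := hcol j
    have hsum : t i j + ∑ i' ∈ Finset.univ.erase i, t i' j = ∑ i' : Fin m, t i' j :=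
      Finset.add_sum_erase _ (fun i' => t i' j) (Finset.mem_univ i)
    rw [hz0] at hsum
    have : t i j = ((z0 - z : ℤ) : ℝ) := by push_cast; linarith [hz]
    obtain ⟨hp, hl⟩ := hfrac i j h0 h1
    exact not_int_of_frac hp hl _ this
  have h2 : ∀ u v, F.Adj u v → ∃ w', w' ≠ v ∧ F.Adj u w' := by
    rintro u v (⟨i, j, rfl, rfl, h0, h1⟩ | ⟨i, j, rfl, rfl, h0, h1⟩)
    · obtain ⟨j', hne, hj0, hj1⟩ := hrowstep i j h0 h1
      exact ⟨Sum.inr j', by simp [hne], Or.inl ⟨i, j', rfl, rfl, hj0, hj1⟩⟩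
    · obtain ⟨i', hne, hi0, hi1⟩ := hcolstep i j h0 h1
      exact ⟨Sum.inl i', by simp [hne], Or.inr ⟨i', j, rfl, rfl, hi0, hi1⟩⟩
  intro i j
  by_contra hno
  push_neg at hno
  exact no_adj_of_acyclic hacF h2 (Sum.inl i) (Sum.inr j)
    (Or.inl ⟨i, j, rfl, rfl, hno.1, hno.2⟩)

lemma simpA_mem_iff (n : ℕ) (I : Finset (Fin n)) (x : Fin n → ℝ) :
    x ∈ simpA n I ↔ (∀ j, 0 ≤ x j) ∧ (∀ j, x j ≠ 0 → j ∈ I) ∧ ∑ j, x j = 1 := by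
  classical
  constructor
  · intro hx
    have hsub : simpA n I ⊆
        {y : Fin n → ℝ | (∀ j, 0 ≤ y j) ∧ (∀ j, y j ≠ 0 → j ∈ I) ∧ ∑ j, y j = 1} := by
      apply convexHull_min
      · rintro y ⟨j, hj, rfl⟩
        dsimp only
        refine ⟨fun k => ?_, fun k hk => ?_, ?_⟩
        · rw [Pi.single_apply]; split <;> norm_num
        · rw [Pi.single_apply] at hk
          by_cases h : k = j
          · subst h; exact hj
          · simp [h] at hk
        · simp [Finset.sum_pi_single']
      · intro y hy z hz θ η hθ hη hθη
        refine ⟨fun j => ?_, fun j hj => ?_, ?_⟩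
        · exact add_nonneg (mul_nonneg hθ (hy.1 j)) (mul_nonneg hη (hz.1 j))
        · by_cases hyj : y j = 0
          · by_cases hzj : z j = 0
            · exfalso; apply hj; simp [hyj, hzj]
            · exact hz.2.1 j hzj
          · exact hy.2.1 j hyj
        · have : ∑ j, (θ • y + η • z) j = θ * ∑ j, y j + η * ∑ j, z j := by
            simp [Finset.sum_add_distrib, Finset.mul_sum]
          rw [this, hy.2.2, hz.2.2]; linarith
    exact hsub hx
  · rintro ⟨h0, hs, h1⟩
    have hsumI : ∑ j ∈ I, x j = 1 := by
      rw [← h1]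
      exact Finset.sum_subset (Finset.subset_univ I)
        (fun j _ hj => by by_contra h; exact hj (hs j h))
    have hmem := Finset.centerMass_mem_convexHull I (fun j _ => h0 j)
      (by rw [hsumI]; norm_num)
      (fun j hj => Set.mem_image_of_mem (fun j => Pi.single j (1 : ℝ)) hj)
    have : I.centerMass x (fun j => Pi.single j (1 : ℝ)) = x := by
      rw [Finset.centerMass_eq_of_sum_1 _ _ hsumI]
      funext k
      rw [Finset.sum_apply]
      have : ∀ j ∈ I, (x j • (Pi.single j (1 : ℝ) : Fin n → ℝ)) k = if k = j then x k else 0 := by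
        intro j hj
        rw [Pi.smul_apply, Pi.single_apply, smul_eq_mul]
        split
        · rename_i h; subst h; ring
        · ring
      rw [Finset.sum_congr rfl this, Finset.sum_ite_eq]
      by_cases hk : k ∈ I
      · simp [hk]
      · simp only [hk, if_false]
        by_contra h
        exact hk (hs k fun h' => h h'.symm)
    rwa [this] at hmem

lemma row_single {N : ℕ} {f : Fin N → ℝ} (h01 : ∀ j, f j = 0 ∨ f j = 1)
    (hsum : ∑ j, f j = 1) : ∃ k, f = Pi.single k (1 : ℝ) := by
  have hex : ∃ k, f k = 1 := by
    by_contra hno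
    push_neg at hno
    have hz : ∀ j, f j = 0 := fun j => (h01 j).resolve_right (hno j)
    rw [Finset.sum_congr rfl fun j _ => hz j] at hsum
    simp at hsum
  obtain ⟨k, hk⟩ := hex
  refine ⟨k, funext fun c => ?_⟩
  rcases eq_or_ne c k with rfl | hck
  · simp [hk]
  · rw [Pi.single_apply, if_neg hck]
    rcases h01 c with h | h
    · exact h
    · exfalso
      have hpair : ∑ j ∈ ({c, k} : Finset (Fin N)), f j = 2 := by
        rw [Finset.sum_pair hck, h, hk]; norm_num
      have hle : ∑ j ∈ ({c, k} : Finset (Fin N)), f j ≤ ∑ j, f j :=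
        Finset.sum_le_sum_of_subset_of_nonneg (Finset.subset_univ _)
          (fun j _ _ => (h01 j).elim (fun h => h.ge) (fun h => by rw [h]; norm_num))
      rw [hpair, hsum] at hle
      norm_num at hle


lemma decomp_single (n m : ℕ) (I : Fin m → Finset (Fin n))
    (hforest : (bipG m n I).IsAcyclic)
    (x : Fin n → ℝ) (hlatt : x ∈ latt n)
    (y : Fin m → Fin n → ℝ) (hy : ∀ i, y i ∈ simpA n (I i)) (hsum : ∑ i, y i = x) :
    ∃ j : Fin m → Fin n, (∀ i, j i ∈ I i) ∧ ∀ i, y i = Pi.single (j i) (1 : ℝ) := by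
  have hmem := fun i => (simpA_mem_iff n (I i) (y i)).mp (hy i)
  have hcol : ∀ c, ∃ z : ℤ, ∑ i, y i c = z := by
    intro c
    obtain ⟨z, hz⟩ := hlatt c
    exact ⟨z, by rw [← Finset.sum_apply, hsum]; exact hz⟩
  have h01 := core n m I hforest y (fun i => (hmem i).1) (fun i => (hmem i).2.1)
    (fun i => (hmem i).2.2) hcol
  have hrs : ∀ i, ∃ k, y i = Pi.single k (1 : ℝ) := fun i =>
    row_single (h01 i) ((hmem i).2.2)
  choose j hj using hrs
  refine ⟨j, fun i => ?_, hj⟩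
  apply (hmem i).2.1 (j i)
  rw [hj i]
  simp

/-- If the bipartite graph associated to nonempty `I_1,…,I_m ⊆ [n]` is a forest,
then every lattice point of `Π := Δ_{I_1} + ⋯ + Δ_{I_m}` is an extreme point (vertex) of `Π`,
and has the form `e_{j_1} + ⋯ + e_{j_m}` with `j_i ∈ I_i` for each `i`. -/
theorem stmt16 (n m : ℕ) (I : Fin m → Finset (Fin n)) (hI : ∀ i, (I i).Nonempty)
    (hforest : (bipG m n I).IsAcyclic)
    (x : Fin n → ℝ) (hx : x ∈ (∑ i : Fin m, simpA n (I i)) ∩ latt n) :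
    x ∈ Set.extremePoints ℝ (∑ i : Fin m, simpA n (I i)) ∧
    ∃ j : Fin m → Fin n, (∀ i, j i ∈ I i) ∧ x = ∑ i, Pi.single (j i) (1 : ℝ) := by
  obtain ⟨hxS, hxL⟩ := hx
  obtain ⟨y, hy, hysum⟩ := (Set.mem_fintype_sum _ _).mp hxS
  obtain ⟨j, hjI, hjy⟩ := decomp_single n m I hforest x hxL y hy hysum
  constructor
  · refine ⟨hxS, ?_⟩
    intro a ha b hb hseg
    obtain ⟨ya, hya, hyasum⟩ := (Set.mem_fintype_sum _ _).mp ha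
    obtain ⟨yb, hyb, hybsum⟩ := (Set.mem_fintype_sum _ _).mp hb
    obtain ⟨θ, η, hθ, hη, hθη, hxeq⟩ := hseg
    set w : Fin m → Fin n → ℝ := fun i => θ • ya i + η • yb i with hw
    have hwmem : ∀ i, w i ∈ simpA n (I i) := fun i =>
      (convex_convexHull ℝ _) (hya i) (hyb i) hθ.le hη.le hθη
    have hwsum : ∑ i, w i = x := by
      rw [hw, Finset.sum_add_distrib, ← Finset.smul_sum, ← Finset.smul_sum,
        hyasum, hybsum]
      exact hxeq
    obtain ⟨k, hkI, hkw⟩ := decomp_single n m I hforest x hxL w hwmem hwsum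
    have hma := fun i => (simpA_mem_iff n (I i) (ya i)).mp (hya i)
    have hmb := fun i => (simpA_mem_iff n (I i) (yb i)).mp (hyb i)
    have hzero : ∀ i c, c ≠ k i → ya i c = 0 ∧ yb i c = 0 := by
      intro i c hc
      have hcongr := congrFun (hkw i) c
      rw [hw] at hcongr
      have h0 : θ * ya i c + η * yb i c = 0 := by
        simpa [Pi.single_apply, hc, smul_eq_mul] using hcongr
      have h1 : 0 ≤ θ * ya i c := mul_nonneg hθ.le ((hma i).1 c)
      have h2 : 0 ≤ η * yb i c := mul_nonneg hη.le ((hmb i).1 c)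
      have h3 : θ * ya i c = 0 := le_antisymm (by linarith) h1
      have h4 : η * yb i c = 0 := le_antisymm (by linarith) h2
      exact ⟨(mul_eq_zero.mp h3).resolve_left (ne_of_gt hθ),
        (mul_eq_zero.mp h4).resolve_left (ne_of_gt hη)⟩
    have hya' : ∀ i, ya i = Pi.single (k i) (1 : ℝ) := by
      intro i
      have hsa : ∑ c, ya i c = ya i (k i) :=
        Finset.sum_eq_single (k i) (fun c _ hc => (hzero i c hc).1)
          (fun h => absurd (Finset.mem_univ _) h)
      funext c
      rcases eq_or_ne c (k i) with rfl | hc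
      · rw [Pi.single_eq_same]
        linarith [(hma i).2.2, hsa]
      · rw [Pi.single_apply, if_neg hc]
        exact (hzero i c hc).1
    have hyb' : ∀ i, yb i = Pi.single (k i) (1 : ℝ) := by
      intro i
      have hsb : ∑ c, yb i c = yb i (k i) :=
        Finset.sum_eq_single (k i) (fun c _ hc => (hzero i c hc).2)
          (fun h => absurd (Finset.mem_univ _) h)
      funext c
      rcases eq_or_ne c (k i) with rfl | hc
      · rw [Pi.single_eq_same]
        linarith [(hmb i).2.2, hsb]
      · rw [Pi.single_apply, if_neg hc]
        exact (hzero i c hc).2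
    · rw [← hyasum, ← hwsum]
      exact Finset.sum_congr rfl fun i _ => (hya' i).trans (hkw i).symm
  · exact ⟨j, hjI, by rw [← hysum]; exact Finset.sum_congr rfl fun i _ => hjy i⟩
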